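/- Let N, d be natural numbers, U_1, …, U_N unitary d×d complex matrices, H_U the associated Feynman clock Hamiltonian on ℂ^{N+1} ⊗ ℂ^d, and A_N the (N+1)×(N+1) clock matrix. Define V = Σ_{j=0}^{N} E_{j,j} ⊗ (U_j ⋯ U_1), where the empty product (j = 0) is the identity on ℂ^d. Then V is unitary and V (A_N ⊗ I_d) V† = H_U. -/

import Mathlib

open Matrix Kronecker

/-- The `(N+1) × (N+1)` clock matrix with entries `(A_N)_{j,j-1} = (A_N)_{j-1,j} =
`√(j(N−j+1))` for `1 ≤ j ≤ N` (here indexed by `j : Fin N`, representing `j+1`). -/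
noncomputable def clockMatrix (N : ℕ) : Matrix (Fin (N + 1)) (Fin (N + 1)) ℂ :=
  ∑ j : Fin N, (Real.sqrt ((((j : ℕ) + 1) * (N - (j : ℕ)) : ℕ)) : ℂ) •
    (Matrix.single j.succ j.castSucc (1 : ℂ) +
      Matrix.single j.castSucc j.succ (1 : ℂ))

/-- The Feynman clock Hamiltonian `H_U = Σ_{j=1}^{N} √(j(N−j+1)) (E_{j,j-1} ⊗ U_j +
E_{j-1,j} ⊗ U_j†)` on `ℂ^{N+1} ⊗ ℂ^d`. -/
noncomputable def clockHam (N d : ℕ) (U : Fin N → Matrix (Fin d) (Fin d) ℂ) :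
    Matrix (Fin (N + 1) × Fin d) (Fin (N + 1) × Fin d) ℂ :=
  ∑ j : Fin N, (Real.sqrt ((((j : ℕ) + 1) * (N - (j : ℕ)) : ℕ)) : ℂ) •
    ((Matrix.single j.succ j.castSucc (1 : ℂ)) ⊗ₖ U j +
      (Matrix.single j.castSucc j.succ (1 : ℂ)) ⊗ₖ (U j)ᴴ)

/-- `V = Σ_{j=0}^{N} E_{j,j} ⊗ (U_j ⋯ U_1)`, where the empty product (`j = 0`) is the
identity on `ℂ^d`. -/
noncomputable def prefixProdV (N d : ℕ) (U : Fin N → Matrix (Fin d) (Fin d) ℂ) :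
    Matrix (Fin (N + 1) × Fin d) (Fin (N + 1) × Fin d) ℂ :=
  ∑ j : Fin (N + 1),
    (Matrix.single j j (1 : ℂ)) ⊗ₖ ((List.ofFn U).take (j : ℕ)).reverse.prod

namespace ClockAux

theorem sum_std_diag {m : Type*} [Fintype m] [DecidableEq m] :
    ∑ j : m, Matrix.single j j (1:ℂ) = 1 := by
  ext a b
  rw [Matrix.sum_apply]
  rcases eq_or_ne a b with h | h
  · subst h; simp [Matrix.single, Matrix.one_apply, eq_comm]
  · simp only [Matrix.single, Matrix.of_apply, Matrix.one_apply, h, if_neg h]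
    simp [h]

theorem kron_conjTranspose {m n p q : Type*} (A : Matrix m n ℂ) (B : Matrix p q ℂ) :
    (A ⊗ₖ B)ᴴ = Aᴴ ⊗ₖ Bᴴ := by
  ext ⟨i,j⟩ ⟨k,l⟩
  simp [conjTranspose_apply, kronecker_apply, mul_comm]

theorem sum_kronecker {ι m n p q : Type*} [Fintype ι] (A : ι → Matrix m n ℂ)
    (B : Matrix p q ℂ) : (∑ i, A i) ⊗ₖ B = ∑ i, A i ⊗ₖ B := by
  ext ⟨i,j⟩ ⟨k,l⟩
  simp [kronecker_apply, Matrix.sum_apply, Finset.sum_mul]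

theorem std_diag_conjTranspose {m : Type*} [DecidableEq m] (j : m) :
    (Matrix.single j j (1:ℂ))ᴴ = Matrix.single j j (1:ℂ) := by
  ext x y
  simp [conjTranspose_apply, Matrix.single, and_comm]

variable {N d : ℕ} (U : Fin N → Matrix (Fin d) (Fin d) ℂ)

noncomputable def P (j : Fin (N + 1)) : Matrix (Fin d) (Fin d) ℂ :=
  ((List.ofFn U).take (j : ℕ)).reverse.prod

theorem V_eq : prefixProdV N d U
    = ∑ j : Fin (N + 1), (Matrix.single j j (1:ℂ)) ⊗ₖ P U j := rfl

theorem P_mem (hU : ∀ j, U j ∈ Matrix.unitaryGroup (Fin d) ℂ) (j : Fin (N + 1)) :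
    P U j ∈ Matrix.unitaryGroup (Fin d) ℂ := by
  apply Submonoid.list_prod_mem
  intro x hx
  rw [List.mem_reverse] at hx
  have hx' := List.mem_of_mem_take hx
  rw [List.mem_ofFn] at hx'
  obtain ⟨i, rfl⟩ := hx'
  exact hU i

theorem P_succ (j : Fin N) : P U j.succ = U j * P U j.castSucc := by
  have hlen : (j : ℕ) < (List.ofFn U).length := by simp [j.isLt]
  show ((List.ofFn U).take ((j : ℕ) + 1)).reverse.prod = _
  rw [List.take_succ, List.getElem?_eq_getElem hlen]
  simp [P]

theorem Vh_eq : (prefixProdV N d U)ᴴ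
    = ∑ j : Fin (N + 1), (Matrix.single j j (1:ℂ)) ⊗ₖ (P U j)ᴴ := by
  rw [V_eq, conjTranspose_sum]
  refine Finset.sum_congr rfl fun j _ => ?_
  rw [kron_conjTranspose, std_diag_conjTranspose]

theorem conj_std (a b : Fin (N + 1)) (M : Matrix (Fin d) (Fin d) ℂ) :
    prefixProdV N d U * (Matrix.single a b (1:ℂ) ⊗ₖ M) * (prefixProdV N d U)ᴴ
      = Matrix.single a b (1:ℂ) ⊗ₖ (P U a * M * (P U b)ᴴ) := by
  rw [Vh_eq, V_eq, Finset.sum_mul]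
  have h1 : ∀ j : Fin (N + 1),
      ((Matrix.single j j (1:ℂ)) ⊗ₖ P U j) * (Matrix.single a b (1:ℂ) ⊗ₖ M)
        = if j = a then Matrix.single a b (1:ℂ) ⊗ₖ (P U a * M) else 0 := by
    intro j
    rcases eq_or_ne j a with h | h
    · subst h
      rw [if_pos rfl, ← mul_kronecker_mul, Matrix.single_mul_single_same, one_mul]
    · rw [if_neg h, ← mul_kronecker_mul, Matrix.single_mul_single_of_ne (h := h), zero_kronecker]
  simp_rw [h1, Finset.sum_ite_eq', Finset.mem_univ, if_pos]
  rw [Finset.mul_sum]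
  have h3 : ∀ k : Fin (N + 1),
      (Matrix.single a b (1:ℂ) ⊗ₖ (P U a * M)) *
        ((Matrix.single k k (1:ℂ)) ⊗ₖ (P U k)ᴴ)
        = if k = b then Matrix.single a b (1:ℂ) ⊗ₖ (P U a * M * (P U b)ᴴ) else 0 := by
    intro k
    rcases eq_or_ne k b with h | h
    · subst h
      rw [if_pos rfl, ← mul_kronecker_mul, Matrix.single_mul_single_same, mul_one]
    · rw [if_neg h, ← mul_kronecker_mul, Matrix.single_mul_single_of_ne (h := Ne.symm h),
        zero_kronecker]
  simp_rw [h3, Finset.sum_ite_eq', Finset.mem_univ, if_pos]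

end ClockAux

/-- `V` is unitary and conjugating `A_N ⊗ I_d` by `V` yields the Feynman clock
Hamiltonian: `V (A_N ⊗ I_d) V† = H_U`. -/
theorem clock_conjugation (N d : ℕ) (U : Fin N → Matrix (Fin d) (Fin d) ℂ)
    (hU : ∀ j, U j ∈ Matrix.unitaryGroup (Fin d) ℂ) :
    prefixProdV N d U ∈ Matrix.unitaryGroup (Fin (N + 1) × Fin d) ℂ ∧
      prefixProdV N d U * ((clockMatrix N) ⊗ₖ (1 : Matrix (Fin d) (Fin d) ℂ)) *
          (prefixProdV N d U)ᴴ = clockHam N d U := by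
  classical
  have hPmem := ClockAux.P_mem U hU
  have hP1 : ∀ j, ClockAux.P U j * (ClockAux.P U j)ᴴ = 1 := by
    intro j
    have := (Matrix.mem_unitaryGroup_iff.mp (hPmem j))
    rwa [Matrix.star_eq_conjTranspose] at this
  constructor
  · rw [Matrix.mem_unitaryGroup_iff, Matrix.star_eq_conjTranspose]
    rw [ClockAux.Vh_eq, ClockAux.V_eq, Finset.sum_mul]
    have key : ∀ j : Fin (N+1),
        ((Matrix.single j j (1:ℂ)) ⊗ₖ ClockAux.P U j) *
          (∑ k : Fin (N+1), (Matrix.single k k (1:ℂ)) ⊗ₖ (ClockAux.P U k)ᴴ)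
        = (Matrix.single j j (1:ℂ)) ⊗ₖ (1 : Matrix (Fin d) (Fin d) ℂ) := by
      intro j
      rw [Finset.mul_sum]
      have h4 : ∀ k : Fin (N+1),
          ((Matrix.single j j (1:ℂ)) ⊗ₖ ClockAux.P U j) *
            ((Matrix.single k k (1:ℂ)) ⊗ₖ (ClockAux.P U k)ᴴ)
          = if k = j then (Matrix.single j j (1:ℂ)) ⊗ₖ (1 : Matrix (Fin d) (Fin d) ℂ)
            else 0 := by
        intro k
        rcases eq_or_ne k j with h | h
        · subst h
          rw [if_pos rfl, ← mul_kronecker_mul, Matrix.single_mul_single_same, mul_one, hP1]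
        · rw [if_neg h, ← mul_kronecker_mul, Matrix.single_mul_single_of_ne (h := Ne.symm h),
            zero_kronecker]
      simp_rw [h4, Finset.sum_ite_eq', Finset.mem_univ, if_pos]
    simp_rw [key]
    rw [← ClockAux.sum_kronecker, ClockAux.sum_std_diag, one_kronecker_one]
  · have hstep := ClockAux.P_succ U
    unfold clockMatrix clockHam
    rw [ClockAux.sum_kronecker]
    simp_rw [smul_kronecker, add_kronecker]
    rw [Finset.mul_sum, Finset.sum_mul]
    apply Finset.sum_congr rfl
    intro j _
    have hc1 : prefixProdV N d U *
        (Matrix.single j.succ j.castSucc (1:ℂ) ⊗ₖ (1 : Matrix (Fin d) (Fin d) ℂ)) *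
          (prefixProdV N d U)ᴴ = Matrix.single j.succ j.castSucc (1:ℂ) ⊗ₖ U j := by
      rw [ClockAux.conj_std, mul_one, hstep, mul_assoc, hP1, mul_one]
    have hc2 : prefixProdV N d U *
        (Matrix.single j.castSucc j.succ (1:ℂ) ⊗ₖ (1 : Matrix (Fin d) (Fin d) ℂ)) *
          (prefixProdV N d U)ᴴ = Matrix.single j.castSucc j.succ (1:ℂ) ⊗ₖ (U j)ᴴ := by
      rw [ClockAux.conj_std, mul_one, hstep, conjTranspose_mul, ← mul_assoc, hP1, one_mul]
    rw [mul_smul_comm, smul_mul_assoc, mul_add, Matrix.add_mul, hc1, hc2]
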